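/- Let λ ∈ [0,1] and suppose f(λ) ≥ 0. Then for every unit vector φ ∈ V ⊕ V orthogonal to both (ξ₀, 0) and (0, η₀), the expectation value satisfies ⟨φ, H̃(λ)φ⟩ ≥ (3/2 − |λ − 1/2| − f(λ))Δ. -/

import Mathlib

/-- For `λ ∈ [0,1]` with `f(λ) ≥ 0`, every unit vector `φ ∈ V ⊕ V` orthogonal to
both `(ξ₀, 0)` and `(0, η₀)` satisfies `⟨φ, H̃(λ)φ⟩ ≥ (3/2 − |λ − 1/2| − f(λ))Δ`. -/
theorem expectation_bound_orthogonal_complement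
    {V : Type*} [NormedAddCommGroup V] [InnerProductSpace ℂ V] [FiniteDimensional ℂ V]
    (Δ μ₀ f₀ : ℝ) (hΔ : 0 < Δ) (hμ₀ : 0 ≤ μ₀) (hμ₀' : μ₀ < 1)
    (hf₀ : f₀ = (1 - μ₀) / 10)
    (H₁ H₂ : V →ₗ[ℂ] V) (hH₁ : H₁.IsSymmetric) (hH₂ : H₂.IsSymmetric)
    (ξ₀ η₀ : V) (hξ : ‖ξ₀‖ = 1) (hη : ‖η₀‖ = 1)
    (hH₁ξ : H₁ ξ₀ = 0) (hH₂η : H₂ η₀ = 0)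
    (hgap₁ : ∀ v : V, (inner ℂ ξ₀ v : ℂ) = 0 → Δ * ‖v‖ ^ 2 ≤ ((inner ℂ v (H₁ v) : ℂ)).re)
    (hgap₂ : ∀ v : V, (inner ℂ η₀ v : ℂ) = 0 → Δ * ‖v‖ ^ 2 ≤ ((inner ℂ v (H₂ v) : ℂ)).re)
    (α : ℝ) (hα : (inner ℂ ξ₀ η₀ : ℂ) = (α : ℂ)) (hα' : 1 - μ₀ ≤ α)
    (f : ℝ → ℝ) (l : ℝ) (hl : l ∈ Set.Icc (0:ℝ) 1) (hfl : 0 ≤ f l)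
    (T : WithLp 2 (V × V) →ₗ[ℂ] WithLp 2 (V × V))
    (hT : ∀ u w : V, T ((WithLp.equiv 2 (V × V)).symm (u, w)) =
      (WithLp.equiv 2 (V × V)).symm
        (H₁ u + ((l * Δ : ℝ) : ℂ) • u + ((f l * Δ : ℝ) : ℂ) • w,
         H₂ w + (((1 - l) * Δ : ℝ) : ℂ) • w + ((f l * Δ : ℝ) : ℂ) • u)) :
    ∀ φ : WithLp 2 (V × V), ‖φ‖ = 1 →
      (inner ℂ ((WithLp.equiv 2 (V × V)).symm (ξ₀, 0)) φ : ℂ) = 0 →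
      (inner ℂ ((WithLp.equiv 2 (V × V)).symm (0, η₀)) φ : ℂ) = 0 →
      (3/2 - |l - 1/2| - f l) * Δ ≤ ((inner ℂ φ (T φ) : ℂ)).re := by
  intro φ hφ h1 h2
  set u : V := φ.fst with hu
  set w : V := φ.snd with hw
  have hφeq : φ = (WithLp.equiv 2 (V × V)).symm (u, w) := rfl
  have h1' : (inner ℂ ξ₀ u : ℂ) = 0 := by
    simpa [WithLp.prod_inner_apply] using h1
  have h2' : (inner ℂ η₀ w : ℂ) = 0 := by
    simpa [WithLp.prod_inner_apply] using h2
  have hnorm : ‖u‖ ^ 2 + ‖w‖ ^ 2 = 1 := by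
    have := WithLp.prod_norm_sq_eq_of_L2 φ
    rw [hφ] at this; simpa using this.symm
  have hg1 : Δ * ‖u‖ ^ 2 ≤ ((inner ℂ u (H₁ u) : ℂ)).re := hgap₁ u h1'
  have hg2 : Δ * ‖w‖ ^ 2 ≤ ((inner ℂ w (H₂ w) : ℂ)).re := hgap₂ w h2'
  have hcs : |((inner ℂ u w : ℂ)).re| ≤ ‖u‖ * ‖w‖ := by
    calc |((inner ℂ u w : ℂ)).re| ≤ ‖(inner ℂ u w : ℂ)‖ := Complex.abs_re_le_norm _
      _ = ‖(inner ℂ u w : ℂ)‖ := rfl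
      _ ≤ ‖u‖ * ‖w‖ := norm_inner_le_norm u w
  have hre : ((inner ℂ w u : ℂ)).re = ((inner ℂ u w : ℂ)).re := by
    rw [← inner_conj_symm u w, Complex.conj_re]
  have hsu : (inner ℂ u u : ℂ) = ((‖u‖ ^ 2 : ℝ) : ℂ) := by
    rw [inner_self_eq_norm_sq_to_K]; norm_cast
  have hsw : (inner ℂ w w : ℂ) = ((‖w‖ ^ 2 : ℝ) : ℂ) := by
    rw [inner_self_eq_norm_sq_to_K]; norm_cast
  have hTφ : T φ = (WithLp.equiv 2 (V × V)).symm
        (H₁ u + ((l * Δ : ℝ) : ℂ) • u + ((f l * Δ : ℝ) : ℂ) • w,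
         H₂ w + (((1 - l) * Δ : ℝ) : ℂ) • w + ((f l * Δ : ℝ) : ℂ) • u) := by
    rw [hφeq, hT]
  have hval : ((inner ℂ φ (T φ) : ℂ)).re
      = ((inner ℂ u (H₁ u) : ℂ)).re + l * Δ * ‖u‖ ^ 2 + f l * Δ * ((inner ℂ u w : ℂ)).re
      + ((inner ℂ w (H₂ w) : ℂ)).re + (1 - l) * Δ * ‖w‖ ^ 2 + f l * Δ * ((inner ℂ u w : ℂ)).re := by
    rw [hTφ, hφeq]
    simp only [WithLp.prod_inner_apply, WithLp.equiv_symm_apply, WithLp.ofLp_toLp,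
      inner_add_right, inner_smul_right, hsu, hsw]
    simp only [Complex.add_re, Complex.mul_re, Complex.ofReal_re, Complex.ofReal_im]
    rw [hre]
    ring
  rw [hval]
  clear hval hTφ hT h1 h2 hφeq hφ hα hgap₁ hgap₂ hH₁ξ hH₂η hH₁ hH₂ hsu hsw h1' h2'
  have hcs' : -(‖u‖ * ‖w‖) ≤ ((inner ℂ u w : ℂ)).re := neg_le_of_abs_le hcs
  obtain ⟨hl0, hl1⟩ := hl
  set a := ‖u‖ with ha
  set b := ‖w‖ with hb
  set r := ((inner ℂ u w : ℂ)).re with hr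
  set g1 := ((inner ℂ u (H₁ u) : ℂ)).re with hg1'
  set g2 := ((inner ℂ w (H₂ w) : ℂ)).re with hg2'
  have ha0 : 0 ≤ a := norm_nonneg _
  have hb0 : 0 ≤ b := norm_nonneg _
  clear_value a b r g1 g2
  clear hcs hre hu hw ha hb hr hg1' hg2'
  clear u w φ
  have hu2 : (0:ℝ) ≤ a ^ 2 := sq_nonneg _
  have hw2 : (0:ℝ) ≤ b ^ 2 := sq_nonneg _
  have h2uw : 2 * (a * b) ≤ 1 := by nlinarith [sq_nonneg (a - b)]
  have hΔab : Δ * a ^ 2 + Δ * b ^ 2 = Δ := by nlinarith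
  have key1 : -(f l * Δ) ≤ f l * Δ * r + f l * Δ * r := by
    nlinarith [mul_nonneg (mul_nonneg hfl hΔ.le) (by linarith : (0:ℝ) ≤ r + a * b),
      mul_nonneg (mul_nonneg hfl hΔ.le) (by linarith : (0:ℝ) ≤ 1 - 2 * (a * b))]
  rcases le_or_gt l (1/2) with h | h
  · rw [abs_of_nonpos (by linarith)]
    have key2 : l * Δ ≤ l * Δ * a ^ 2 + (1 - l) * Δ * b ^ 2 := by
      nlinarith [mul_nonneg (mul_nonneg (by linarith : (0:ℝ) ≤ 1 - 2 * l) hΔ.le) hw2]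
    have expand : (3/2 - -(l - 1/2) - f l) * Δ = Δ + l * Δ - f l * Δ := by ring
    rw [expand]
    linarith [key1, key2, hg1, hg2, hΔab]
  · rw [abs_of_pos (by linarith)]
    have key2 : (1 - l) * Δ ≤ l * Δ * a ^ 2 + (1 - l) * Δ * b ^ 2 := by
      nlinarith [mul_nonneg (mul_nonneg (by linarith : (0:ℝ) ≤ 2 * l - 1) hΔ.le) hu2]
    have expand : (3/2 - (l - 1/2) - f l) * Δ = Δ + (1 - l) * Δ - f l * Δ := by ring
    rw [expand]
    linarith [key1, key2, hg1, hg2, hΔab]
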